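/- Let k ≥ 2 and let n be an integer with 2^{k−1} < n ≤ 2^k − 1. Then the codes S_{n,k} and D_{n,k} are equivalent, i.e., there exists a permutation π of the n coordinate positions such that D_{n,k} = {(c_{π(1)},…,c_{π(n)}) : (c_1,…,c_n) ∈ S_{n,k}}. -/

import Mathlib

open Finset

/-- The value of column `j` (0-indexed) of the matrix
`H_k = [H_k^(k-1) | H_k^(k-2) | … | H_k^(0)]`, read as a `k`-bit integer with
row 1 as the most significant bit.  (Column `c` of the block `H_k^(m)` is the
vector `(0,…,0,1,binary_m(c))`, i.e. the integer `2^m + c`; the block `H_k^(m)`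
occupies global columns `[2^k - 2^(m+1), 2^k - 2^m)`, so that
`m = ⌊log₂ (2^k - 1 - j)⌋` and the value is `3·2^m + j - 2^k`.) -/
def colVal (k j : ℕ) : ℕ := 3 * 2 ^ Nat.log2 (2 ^ k - 1 - j) + j - 2 ^ k

/-- Row `i` (1-indexed, `1 ≤ i ≤ k`) of the matrix `H_k(n)` consisting of the
first `n` columns of `H_k`. -/
def Hrow (k n : ℕ) (i : ℕ) : Fin n → ZMod 2 :=
  fun j => if Nat.testBit (colVal k j) (k - i) then 1 else 0

/-- The code `S_{n,k}`: the binary linear code spanned by the rows of `H_k(n)`. -/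
def SCode (k n : ℕ) : Submodule (ZMod 2) (Fin n → ZMod 2) :=
  Submodule.span (ZMod 2) (Set.range fun i : Fin k => Hrow k n ((i : ℕ) + 1))

/-- `w_i`: the Hamming weight of the `i`-th (1-indexed) row of `H_k(n)`. -/
def rowWt (k n i : ℕ) : ℕ := hammingNorm (Hrow k n i)

/-- `α_i`: the `i`-th entry (1-indexed) of the last (`n`-th) column of `H_k(n)`;
`true` encodes `1` and `false` encodes `0`. -/
def alphaBit (k n i : ℕ) : Bool := Nat.testBit (colVal k (n - 1)) (k - i)

/-- Row `i` (1-indexed) of the matrix `M_{n,k}`, whose `j`-th column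
(0-indexed) is the `k`-bit binary representation of `2^k - 1 - j`, MSB first. -/
def Mrow (k n : ℕ) (i : ℕ) : Fin n → ZMod 2 :=
  fun j => if Nat.testBit (2 ^ k - 1 - (j : ℕ)) (k - i) then 1 else 0

/-- The code `D_{n,k}`: the binary linear code spanned by the rows of `M_{n,k}`. -/
def DCode (k n : ℕ) : Submodule (ZMod 2) (Fin n → ZMod 2) :=
  Submodule.span (ZMod 2) (Set.range fun i : Fin k => Mrow k n ((i : ℕ) + 1))

/-- The value of column `j` (0-indexed) of the generalized matrix consisting of
`t-1` copies of `H_k^(k-1)` followed by `H_k(n')`, where `n = 2^(k-1)·(t-1) + n'`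
with `2^(k-1) ≤ n' ≤ 2^k - 1` (so `t - 1 = (n - 2^(k-1)) / 2^(k-1)`). -/
def gcolVal (k n j : ℕ) : ℕ :=
  if j < (n - 2 ^ (k - 1)) / 2 ^ (k - 1) * 2 ^ (k - 1) then
    2 ^ (k - 1) + j % 2 ^ (k - 1)
  else colVal k (j - (n - 2 ^ (k - 1)) / 2 ^ (k - 1) * 2 ^ (k - 1))

/-- The generalized code `S_{n,k}`, defined for every `n ≥ 2^(k-1)`:
the span of the rows of the `k × n` matrix obtained by concatenating `t-1`
copies of `H_k^(k-1)` followed by `H_k(n')`. -/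
def GSCode (k n : ℕ) : Submodule (ZMod 2) (Fin n → ZMod 2) :=
  Submodule.span (ZMod 2)
    (Set.range fun i : Fin k => fun j : Fin n =>
      if Nat.testBit (gcolVal k n (j : ℕ)) (k - ((i : ℕ) + 1)) then (1 : ZMod 2) else 0)

/-- The minimum distance of a binary linear code: the least Hamming weight of a
nonzero codeword. -/
noncomputable def minDist {n : ℕ} (C : Submodule (ZMod 2) (Fin n → ZMod 2)) : ℕ :=
  sInf {w | ∃ c ∈ C, c ≠ 0 ∧ hammingNorm c = w}

/-- `A_w`: the number of codewords of `C` of Hamming weight `w`. -/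
noncomputable def numWt {n : ℕ} (C : Submodule (ZMod 2) (Fin n → ZMod 2)) (w : ℕ) : ℕ :=
  Set.ncard {c : Fin n → ZMod 2 | c ∈ C ∧ hammingNorm c = w}

/-- The undetected error probability
`P_ue(C,p) = Σ_{w=1}^n A_w p^w (1-p)^(n-w)`. -/
noncomputable def Pue {n : ℕ} (C : Submodule (ZMod 2) (Fin n → ZMod 2)) (p : ℝ) : ℝ :=
  ∑ w ∈ Finset.Icc 1 n, (numWt C w : ℝ) * p ^ w * (1 - p) ^ (n - w)

/-- A code is proper if `p ↦ P_ue(C,p)` is monotonically increasing on `[0, 1/2]`. -/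
def IsProper {n : ℕ} (C : Submodule (ZMod 2) (Fin n → ZMod 2)) : Prop :=
  MonotoneOn (Pue C) (Set.Icc (0 : ℝ) (1 / 2))

/-- An `[n,k]` code is satisfactory if `P_ue(C,p) ≤ 2^(k-n)` for all `p ∈ [0,1/2]`. -/
def IsSatisfactory (k : ℕ) {n : ℕ} (C : Submodule (ZMod 2) (Fin n → ZMod 2)) : Prop :=
  ∀ p ∈ Set.Icc (0 : ℝ) (1 / 2), Pue C p ≤ (2 : ℝ) ^ ((k : ℤ) - (n : ℤ))

/-- The binary entropy function `h(x) = -x log₂ x - (1-x) log₂ (1-x)`. -/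
noncomputable def binEnt (x : ℝ) : ℝ :=
  -(x * Real.logb 2 x) - (1 - x) * Real.logb 2 (1 - x)

/-- `U_m = (2^(m+2) - 3)·(1 - h((2^(m+1) - 2)/(2^(m+2) - 3)))`. -/
noncomputable def Ufun (m : ℕ) : ℝ :=
  ((2 : ℝ) ^ (m + 2) - 3) * (1 - binEnt (((2 : ℝ) ^ (m + 1) - 2) / ((2 : ℝ) ^ (m + 2) - 3)))

namespace Stmt0Aux


/-- XOR with the mask `2^s - 1` on the low `s` bits, applied when bit `s` is set. -/
def Amap (s x : ℕ) : ℕ :=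
  2 ^ s * (x / 2 ^ s) + (if x / 2 ^ s % 2 = 1 then 2 ^ s - 1 - x % 2 ^ s else x % 2 ^ s)

lemma log2_eq {t x : ℕ} (h1 : 2 ^ t ≤ x) (h2 : x < 2 ^ (t + 1)) : Nat.log2 x = t := by
  have hx : x ≠ 0 := by have := Nat.one_le_two_pow (n := t); omega
  have h3 := (Nat.le_log2 hx).2 h1
  have h4 := (Nat.log2_lt hx).2 h2
  omega

lemma Amap_div (s x : ℕ) : Amap s x / 2 ^ s = x / 2 ^ s := by
  have hP : 0 < 2 ^ s := Nat.pow_pos (by norm_num)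
  have hu : x % 2 ^ s < 2 ^ s := Nat.mod_lt _ hP
  have h2 : (if x / 2 ^ s % 2 = 1 then 2 ^ s - 1 - x % 2 ^ s else x % 2 ^ s) < 2 ^ s := by
    split <;> omega
  rw [Amap, Nat.mul_add_div hP, Nat.div_eq_of_lt h2, Nat.add_zero]

lemma Amap_mod (s x : ℕ) :
    Amap s x % 2 ^ s = (if x / 2 ^ s % 2 = 1 then 2 ^ s - 1 - x % 2 ^ s else x % 2 ^ s) := by
  have hP : 0 < 2 ^ s := Nat.pow_pos (by norm_num)
  have hu : x % 2 ^ s < 2 ^ s := Nat.mod_lt _ hP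
  have h2 : (if x / 2 ^ s % 2 = 1 then 2 ^ s - 1 - x % 2 ^ s else x % 2 ^ s) < 2 ^ s := by
    split <;> omega
  rw [Amap, Nat.mul_add_mod, Nat.mod_eq_of_lt h2]

lemma Amap_invol (s x : ℕ) : Amap s (Amap s x) = x := by
  have hP : 0 < 2 ^ s := Nat.pow_pos (by norm_num)
  have hu : x % 2 ^ s < 2 ^ s := Nat.mod_lt _ hP
  have e2 := Nat.div_add_mod x (2 ^ s)
  have h1 : Amap s (Amap s x) = 2 ^ s * (Amap s x / 2 ^ s) +
      (if Amap s x / 2 ^ s % 2 = 1 then 2 ^ s - 1 - Amap s x % 2 ^ s else Amap s x % 2 ^ s) := rfl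
  rw [h1, Amap_div, Amap_mod]
  rcases Nat.mod_two_eq_zero_or_one (x / 2 ^ s) with h | h <;> simp [h] <;> omega

lemma testBit_high_eq {s b x y : ℕ} (hb : s ≤ b) (h : x / 2 ^ s = y / 2 ^ s) :
    Nat.testBit x b = Nat.testBit y b := by
  rw [Nat.testBit_eq_decide_div_mod_eq, Nat.testBit_eq_decide_div_mod_eq]
  have key : ∀ z : ℕ, z / 2 ^ b = z / 2 ^ s / 2 ^ (b - s) := by
    intro z
    rw [Nat.div_div_eq_div_mul, ← pow_add]
    congr 2
    omega
  rw [key x, key y, h]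

lemma testBit_low {s b q u : ℕ} (hu : u < 2 ^ s) (hb : b < s) :
    Nat.testBit (2 ^ s * q + u) b = Nat.testBit u b := by
  rw [Nat.testBit_eq_decide_div_mod_eq, Nat.testBit_eq_decide_div_mod_eq]
  have h2 : 2 ^ s * q + u = 2 ^ b * (2 ^ (s - b) * q) + u := by
    rw [← mul_assoc, ← pow_add]
    congr 3
    omega
  rw [h2, Nat.mul_add_div (Nat.pow_pos (by norm_num))]
  have h3 : 2 ^ (s - b) * q = 2 * (2 ^ (s - b - 1) * q) := by
    rw [← mul_assoc]
    congr 1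
    rw [← pow_succ']
    congr 1
    omega
  rw [h3]
  generalize u / 2 ^ b = a
  generalize 2 ^ (s - b - 1) * q = c
  simp only [decide_eq_decide]
  omega

lemma testBit_comp {s b u : ℕ} (hu : u < 2 ^ s) (hb : b < s) :
    Nat.testBit (2 ^ s - 1 - u) b = ! Nat.testBit u b := by
  have h : 2 ^ s - 1 - u = 2 ^ s - (u + 1) := by omega
  rw [h, Nat.testBit_two_pow_sub_succ hu]
  simp [hb]

lemma Amap_testBit_high (s x b : ℕ) (hb : s ≤ b) :
    Nat.testBit (Amap s x) b = Nat.testBit x b :=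
  testBit_high_eq hb (Amap_div s x)

lemma Amap_testBit_low (s x b : ℕ) (hb : b < s) :
    Nat.testBit (Amap s x) b = xor (Nat.testBit x b) (Nat.testBit x s) := by
  have hP : 0 < 2 ^ s := Nat.pow_pos (by norm_num)
  have hu : x % 2 ^ s < 2 ^ s := Nat.mod_lt _ hP
  have hx : x = 2 ^ s * (x / 2 ^ s) + x % 2 ^ s := (Nat.div_add_mod x (2 ^ s)).symm
  have hy : Amap s x = 2 ^ s * (x / 2 ^ s) +
      (if x / 2 ^ s % 2 = 1 then 2 ^ s - 1 - x % 2 ^ s else x % 2 ^ s) := rfl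
  have hxs : Nat.testBit x s = decide (x / 2 ^ s % 2 = 1) := Nat.testBit_eq_decide_div_mod_eq
  have hxb : Nat.testBit x b = Nat.testBit (x % 2 ^ s) b := by
    conv_lhs => rw [hx]
    exact testBit_low hu hb
  rw [hy]
  rcases Nat.mod_two_eq_zero_or_one (x / 2 ^ s) with h | h
  · rw [show (if x / 2 ^ s % 2 = 1 then 2 ^ s - 1 - x % 2 ^ s else x % 2 ^ s) = x % 2 ^ s
        from by rw [h]; rfl]
    rw [testBit_low hu hb, hxb, hxs, h]
    simp
  · have h2 : 2 ^ s - 1 - x % 2 ^ s < 2 ^ s := by omega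
    rw [if_pos h]
    rw [testBit_low h2 hb, testBit_comp hu hb, hxb, hxs, h]
    simp


lemma colVal_psi (k v t : ℕ) (htk : t + 1 ≤ k) (h1 : 2 ^ t ≤ v) (h2 : v < 2 ^ (t + 1)) :
    colVal k (v + 2 ^ k - 3 * 2 ^ t) = v := by
  have e1 : (2:ℕ) ^ (t + 1) = 2 * 2 ^ t := by ring
  have e2 : (2:ℕ) ^ (t + 1) ≤ 2 ^ k := Nat.pow_le_pow_right (by norm_num) htk
  have h5 : 2 ^ k - 1 - (v + 2 ^ k - 3 * 2 ^ t) = 3 * 2 ^ t - 1 - v := by omega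
  have h6 : 2 ^ t ≤ 3 * 2 ^ t - 1 - v := by omega
  have h7 : 3 * 2 ^ t - 1 - v < 2 ^ (t + 1) := by omega
  rw [colVal, h5, log2_eq h6 h7]
  omega

lemma div_bounds {s t x y : ℕ} (hst : s ≤ t) (hdiv : y / 2 ^ s = x / 2 ^ s)
    (h1 : 2 ^ t ≤ x) (h2 : x < 2 ^ (t + 1)) : 2 ^ t ≤ y ∧ y < 2 ^ (t + 1) := by
  have hP : 0 < 2 ^ s := Nat.pow_pos (by norm_num)
  have e1 : 2 ^ (t - s) * 2 ^ s = 2 ^ t := by rw [← pow_add]; congr 1; omega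
  have e2 : 2 ^ (t + 1 - s) * 2 ^ s = 2 ^ (t + 1) := by rw [← pow_add]; congr 1; omega
  have hyd2 := Nat.div_add_mod y (2 ^ s)
  rw [hdiv] at hyd2
  have hym : y % 2 ^ s < 2 ^ s := Nat.mod_lt _ hP
  have hq1 : 2 ^ (t - s) ≤ x / 2 ^ s := (Nat.le_div_iff_mul_le hP).2 (by omega)
  have hq2 : x / 2 ^ s < 2 ^ (t + 1 - s) := (Nat.div_lt_iff_lt_mul hP).2 (by omega)
  have hmul1 : 2 ^ s * 2 ^ (t - s) ≤ 2 ^ s * (x / 2 ^ s) := Nat.mul_le_mul_left _ hq1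
  have hmul2 : 2 ^ s * (x / 2 ^ s + 1) ≤ 2 ^ s * 2 ^ (t + 1 - s) :=
    Nat.mul_le_mul_left _ hq2
  have hexp : 2 ^ s * (x / 2 ^ s + 1) = 2 ^ s * (x / 2 ^ s) + 2 ^ s := by ring
  have hc1 : 2 ^ s * 2 ^ (t - s) = 2 ^ (t - s) * 2 ^ s := by ring
  have hc2 : 2 ^ s * 2 ^ (t + 1 - s) = 2 ^ (t + 1 - s) * 2 ^ s := by ring
  omega

/-- The coordinate permutation: position `j` of `M_{n,k}` is sent to the position of
`H_k(n)` whose column equals `Amap s (2^k-1-j)`. -/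
def pind (k n j : ℕ) : ℕ :=
  Amap (Nat.log2 (2 ^ k - n)) (2 ^ k - 1 - j) + 2 ^ k
    - 3 * 2 ^ Nat.log2 (Amap (Nat.log2 (2 ^ k - n)) (2 ^ k - 1 - j))

lemma key (k n j : ℕ) (hk : 2 ≤ k) (hn1 : 2 ^ (k - 1) < n) (hn2 : n ≤ 2 ^ k - 1)
    (hj : j < n) :
    pind k n j < n ∧ colVal k (pind k n j) = Amap (Nat.log2 (2 ^ k - n)) (2 ^ k - 1 - j) := by
  have hk2 : 2 ^ k = 2 * 2 ^ (k - 1) := by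
    rw [← pow_succ']; congr 1; omega
  set d := 2 ^ k - n with hd
  have hd1 : 1 ≤ d := by omega
  have hd2 : d < 2 ^ (k - 1) := by omega
  set s := Nat.log2 d with hs
  have hs1 : 2 ^ s ≤ d := Nat.log2_self_le (by omega)
  have hs2 : d < 2 ^ (s + 1) := Nat.lt_log2_self
  have hsk : s + 1 ≤ k - 1 := by
    by_contra h
    have : 2 ^ (k - 1) ≤ 2 ^ s := Nat.pow_le_pow_right (by norm_num) (by omega)
    omega
  set x := 2 ^ k - 1 - j with hx
  have hx1 : d ≤ x := by omega
  have hx2 : x ≤ 2 ^ k - 1 := by omega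
  set t := Nat.log2 x with ht
  have ht1 : 2 ^ t ≤ x := Nat.log2_self_le (by omega)
  have ht2 : x < 2 ^ (t + 1) := Nat.lt_log2_self
  have hst : s ≤ t := by
    by_contra h
    have : 2 ^ (t + 1) ≤ 2 ^ s := Nat.pow_le_pow_right (by norm_num) (by omega)
    omega
  have htk : t + 1 ≤ k := by
    by_contra h
    have : 2 ^ k ≤ 2 ^ t := Nat.pow_le_pow_right (by norm_num) (by omega)
    omega
  set y := Amap s x with hy
  obtain ⟨hy1, hy2⟩ := div_bounds hst (Amap_div s x) ht1 ht2
  have hylog : Nat.log2 y = t := log2_eq hy1 hy2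
  have hyd : y + d < 3 * 2 ^ t := by
    rcases Nat.lt_or_ge s t with h | h
    · have : 2 ^ (s + 1) ≤ 2 ^ t := Nat.pow_le_pow_right (by norm_num) (by omega)
      have e : (2:ℕ) ^ (t + 1) = 2 * 2 ^ t := by ring
      omega
    · have hts : t = s := by omega
      have hq : x / 2 ^ s = 1 := by
        apply Nat.div_eq_of_lt_le
        · omega
        · rw [hts] at ht2
          have e : (2:ℕ) ^ (s + 1) = 2 * 2 ^ s := by ring
          omega
      have hxm := Nat.div_add_mod x (2 ^ s)
      rw [hq] at hxm
      have hy' : y = 2 ^ s + (2 ^ s - 1 - x % 2 ^ s) := by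
        rw [show y = 2 ^ s * (x / 2 ^ s) +
          (if x / 2 ^ s % 2 = 1 then 2 ^ s - 1 - x % 2 ^ s else x % 2 ^ s) from rfl, hq]
        norm_num
      have hxms : x % 2 ^ s < 2 ^ s := Nat.mod_lt _ (Nat.pow_pos (by norm_num))
      rw [hts]
      omega
  have hpind : pind k n j = y + 2 ^ k - 3 * 2 ^ t := by
    rw [pind, ← hs, ← hx, ← hy, hylog]
  have e2 : (2:ℕ) ^ (t + 1) ≤ 2 ^ k := Nat.pow_le_pow_right (by norm_num) htk
  have e3 : (2:ℕ) ^ (t + 1) = 2 * 2 ^ t := by ring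
  constructor
  · rw [hpind]; omega
  · rw [hpind, colVal_psi k y t htk hy1 hy2]

lemma fun_add_self {n : ℕ} (v : Fin n → ZMod 2) : v + v = 0 := by
  funext j
  show v j + v j = 0
  exact CharTwo.add_self_eq_zero _

end Stmt0Aux

/-- For `2 ≤ k` and `2^(k-1) < n ≤ 2^k - 1`, the codes `S_{n,k}`
and `D_{n,k}` are equivalent: there is a permutation `π` of the coordinates with
`D_{n,k} = {(c_{π(1)},…,c_{π(n)}) : c ∈ S_{n,k}}`. -/
theorem stmt0 (k n : ℕ) (hk : 2 ≤ k) (hn1 : 2 ^ (k - 1) < n) (hn2 : n ≤ 2 ^ k - 1) :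
    ∃ π : Equiv.Perm (Fin n),
      (DCode k n : Set (Fin n → ZMod 2)) =
        (fun c : Fin n → ZMod 2 => fun i => c (π i)) ''
          (SCode k n : Set (Fin n → ZMod 2)) := by
  classical
  have hk2 : 2 ^ k = 2 * 2 ^ (k - 1) := by rw [← pow_succ']; congr 1; omega
  set s := Nat.log2 (2 ^ k - n) with hs
  have hd1 : 1 ≤ 2 ^ k - n := by omega
  have hd2 : 2 ^ k - n < 2 ^ (k - 1) := by omega
  have hs1 : 2 ^ s ≤ 2 ^ k - n := Nat.log2_self_le (by omega)
  have hs2 : 2 ^ k - n < 2 ^ (s + 1) := Nat.lt_log2_self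
  have hsk : s + 1 ≤ k - 1 := by
    by_contra h
    have : 2 ^ (k - 1) ≤ 2 ^ s := Nat.pow_le_pow_right (by norm_num) (by omega)
    omega
  have hfinj : Function.Injective (fun j : Fin n =>
      (⟨Stmt0Aux.pind k n j, (Stmt0Aux.key k n j hk hn1 hn2 j.2).1⟩ : Fin n)) := by
    intro j1 j2 hj
    have h1 := (Stmt0Aux.key k n j1 hk hn1 hn2 j1.2).2
    have h2 := (Stmt0Aux.key k n j2 hk hn1 hn2 j2.2).2
    have hp : Stmt0Aux.pind k n j1 = Stmt0Aux.pind k n j2 := congrArg Fin.val hj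
    rw [hp, h2] at h1
    have h3 := congrArg (Stmt0Aux.Amap (Nat.log2 (2 ^ k - n))) h1
    rw [Stmt0Aux.Amap_invol, Stmt0Aux.Amap_invol] at h3
    have hj1 : (j1 : ℕ) < n := j1.2
    have hj2 : (j2 : ℕ) < n := j2.2
    apply Fin.ext
    omega
  set π : Equiv.Perm (Fin n) :=
    Equiv.ofBijective _ (Finite.injective_iff_bijective.mp hfinj) with hπ
  have hπval : ∀ j : Fin n, ((π j : Fin n) : ℕ) = Stmt0Aux.pind k n j := fun j => rfl
  have hcol : ∀ j : Fin n, colVal k ((π j : Fin n) : ℕ) =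
      Stmt0Aux.Amap s (2 ^ k - 1 - (j : ℕ)) := by
    intro j
    rw [hπval j, hs]
    exact (Stmt0Aux.key k n j hk hn1 hn2 j.2).2
  have hGA : ∀ i : Fin k, s ≤ k - ((i : ℕ) + 1) →
      (fun j : Fin n => Hrow k n ((i : ℕ) + 1) (π j)) = Mrow k n ((i : ℕ) + 1) := by
    intro i hb
    funext j
    show (if Nat.testBit (colVal k ((π j : Fin n) : ℕ)) (k - ((i : ℕ) + 1)) then (1 : ZMod 2)
      else 0) = _
    rw [hcol j, Stmt0Aux.Amap_testBit_high _ _ _ hb]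
    rfl
  have hGB : ∀ i : Fin k, k - ((i : ℕ) + 1) < s →
      (fun j : Fin n => Hrow k n ((i : ℕ) + 1) (π j)) =
        Mrow k n ((i : ℕ) + 1) + Mrow k n (k - s) := by
    intro i hb
    funext j
    show (if Nat.testBit (colVal k ((π j : Fin n) : ℕ)) (k - ((i : ℕ) + 1)) then (1 : ZMod 2)
      else 0) = Mrow k n ((i : ℕ) + 1) j + Mrow k n (k - s) j
    rw [hcol j, Stmt0Aux.Amap_testBit_low _ _ _ hb]
    have hks : k - (k - s) = s := by omega
    show _ = (if Nat.testBit (2 ^ k - 1 - (j : ℕ)) (k - ((i : ℕ) + 1)) then (1 : ZMod 2) else 0)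
      + (if Nat.testBit (2 ^ k - 1 - (j : ℕ)) (k - (k - s)) then (1 : ZMod 2) else 0)
    rw [hks]
    cases h1 : Nat.testBit (2 ^ k - 1 - (j : ℕ)) (k - ((i : ℕ) + 1)) <;>
      cases h2 : Nat.testBit (2 ^ k - 1 - (j : ℕ)) s <;> simp [h1, h2] <;> decide
  have hi0lt : k - 1 - s < k := by omega
  have hi0 : k - 1 - s + 1 = k - s := by omega
  have hM0 : (fun j : Fin n => Hrow k n (k - 1 - s + 1) (π j)) = Mrow k n (k - s) := by
    have := hGA ⟨k - 1 - s, hi0lt⟩ (by simp only [Fin.val_mk]; omega)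
    simp only [Fin.val_mk] at this
    rw [this, hi0]
  have hmap : (SCode k n).map (LinearMap.funLeft (ZMod 2) (ZMod 2) π)
      = Submodule.span (ZMod 2)
        (Set.range fun i : Fin k => fun j : Fin n => Hrow k n ((i : ℕ) + 1) (π j)) := by
    rw [SCode, Submodule.map_span, ← Set.range_comp]
    rfl
  have hmain : DCode k n = (SCode k n).map (LinearMap.funLeft (ZMod 2) (ZMod 2) π) := by
    rw [hmap]
    apply le_antisymm
    · rw [DCode]
      apply Submodule.span_le.2
      rintro _ ⟨i, rfl⟩
      show Mrow k n ((i : ℕ) + 1) ∈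
        (Submodule.span (ZMod 2)
          (Set.range fun i : Fin k => fun j : Fin n => Hrow k n ((i : ℕ) + 1) (π j)) :
            Set (Fin n → ZMod 2))
      by_cases hb : s ≤ k - ((i : ℕ) + 1)
      · rw [← hGA i hb]
        exact Submodule.subset_span ⟨i, rfl⟩
      · push_neg at hb
        have heq : Mrow k n ((i : ℕ) + 1) = (fun j : Fin n => Hrow k n ((i : ℕ) + 1) (π j)) +
            (fun j : Fin n => Hrow k n (k - 1 - s + 1) (π j)) := by
          rw [hGB i hb, hM0, add_assoc, Stmt0Aux.fun_add_self, add_zero]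
        rw [heq]
        exact add_mem (Submodule.subset_span ⟨i, rfl⟩)
          (Submodule.subset_span ⟨⟨k - 1 - s, hi0lt⟩, rfl⟩)
    · apply Submodule.span_le.2
      rintro _ ⟨i, rfl⟩
      show (fun j : Fin n => Hrow k n ((i : ℕ) + 1) (π j)) ∈ (DCode k n : Set (Fin n → ZMod 2))
      by_cases hb : s ≤ k - ((i : ℕ) + 1)
      · rw [hGA i hb]
        exact Submodule.subset_span ⟨i, rfl⟩
      · push_neg at hb
        rw [hGB i hb]
        apply add_mem
        · exact Submodule.subset_span ⟨i, rfl⟩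
        · rw [← hi0]
          exact Submodule.subset_span ⟨⟨k - 1 - s, hi0lt⟩, rfl⟩
  refine ⟨π, ?_⟩
  rw [hmain, Submodule.map_coe]
  rfl
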